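/- Let q be a rational number with 0 < q < 1 whose denominator in lowest terms is at least 2 (i.e., 1/q is not an integer), and let M_q be the additive submonoid of the nonnegative rationals generated by {q^n : n ≥ 0}. Then M_q does not satisfy the ACCP; in fact, the ascending chain of principal ideals (d·q^n + M_q) for n ≥ 0, where d is the denominator of q, does not stabilize. -/

import Mathlib

/-- Principal ideal `b + S` of an element `b` of the submonoid given by the subset `S`. -/
def PIdealIn (S : Set ℚ) (b : ℚ) : Set ℚ := {x | ∃ c ∈ S, x = b + c}

/-- The submonoid given by the subset `S` satisfies the ACCP. -/
def ACCPIn (S : Set ℚ) : Prop :=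
  ∀ f : ℕ → ℚ, (∀ n, f n ∈ S) →
    (∀ n, PIdealIn S (f n) ⊆ PIdealIn S (f (n + 1))) →
    ∃ N, ∀ n, N ≤ n → PIdealIn S (f n) = PIdealIn S (f N)

lemma Mq_nonneg (q : ℚ) (h0 : 0 < q) :
    ∀ x ∈ (AddSubmonoid.closure {x : ℚ | ∃ n : ℕ, x = q ^ n} : Set ℚ), 0 ≤ x := by
  intro x hx
  induction hx using AddSubmonoid.closure_induction with
  | mem y hy => obtain ⟨n, rfl⟩ := hy; positivity
  | zero => exact le_refl 0
  | add a b _ _ ha hb => exact add_nonneg ha hb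

lemma Mq_nat_mul (q : ℚ) (m k : ℕ) :
    (m : ℚ) * q ^ k ∈ (AddSubmonoid.closure {x : ℚ | ∃ n : ℕ, x = q ^ n}) := by
  induction m with
  | zero => simpa using AddSubmonoid.zero_mem _
  | succ m ih =>
      have : ((m + 1 : ℕ) : ℚ) * q ^ k = (m : ℚ) * q ^ k + q ^ k := by push_cast; ring
      rw [this]
      exact AddSubmonoid.add_mem _ ih (AddSubmonoid.subset_closure ⟨k, rfl⟩)

/-- For rational `0 < q < 1` with `1/q` not an integer, the Puiseux monoid
`M_q = ⟨qⁿ : n ≥ 0⟩` does not satisfy the ACCP; indeed the ascending chain of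
principal ideals `d·qⁿ + M_q` (where `d` is the denominator of `q`) does not
stabilize. -/
theorem Mq_not_accp (q : ℚ) (h0 : 0 < q) (h1 : q < 1)
    (hint : ¬ ∃ n : ℤ, q⁻¹ = (n : ℚ)) :
    (∀ n : ℕ,
      PIdealIn (AddSubmonoid.closure {x : ℚ | ∃ n : ℕ, x = q ^ n} : Set ℚ)
        ((q.den : ℚ) * q ^ n) ⊆
      PIdealIn (AddSubmonoid.closure {x : ℚ | ∃ n : ℕ, x = q ^ n} : Set ℚ)
        ((q.den : ℚ) * q ^ (n + 1))) ∧
    (¬ ∃ N : ℕ, ∀ n, N ≤ n →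
      PIdealIn (AddSubmonoid.closure {x : ℚ | ∃ n : ℕ, x = q ^ n} : Set ℚ)
        ((q.den : ℚ) * q ^ n) =
      PIdealIn (AddSubmonoid.closure {x : ℚ | ∃ n : ℕ, x = q ^ n} : Set ℚ)
        ((q.den : ℚ) * q ^ N)) ∧
    ¬ ACCPIn (AddSubmonoid.closure {x : ℚ | ∃ n : ℕ, x = q ^ n} : Set ℚ) := by
  set M := (AddSubmonoid.closure {x : ℚ | ∃ n : ℕ, x = q ^ n} : AddSubmonoid ℚ) with hM
  have hden : (0 : ℚ) < (q.den : ℚ) := by positivity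
  have hnumden : (q.den : ℚ) * q = (q.num : ℚ) := by
    rw [mul_comm, Rat.mul_den_eq_num]
  have hnumpos : 0 < q.num := Rat.num_pos.mpr h0
  have hnumltQ : (q.num : ℚ) < (q.den : ℚ) := by nlinarith [hnumden]
  have hnumlt : q.num < (q.den : ℤ) := by exact_mod_cast hnumltQ
  -- the key identity element
  have hkey : ∀ n : ℕ, (q.den : ℚ) * q ^ n =
      (q.den : ℚ) * q ^ (n + 1) + ((q.den : ℚ) - (q.num : ℚ)) * q ^ n := by
    intro n
    have : (q.den : ℚ) * q ^ (n + 1) = (q.num : ℚ) * q ^ n := by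
      rw [pow_succ]; rw [← hnumden]; ring
    rw [this]; ring
  have hdiffmem : ∀ n : ℕ, ((q.den : ℚ) - (q.num : ℚ)) * q ^ n ∈ M := by
    intro n
    have h1' : ((q.den - q.num.toNat : ℕ) : ℚ) = (q.den : ℚ) - (q.num : ℚ) := by
      have hz : ((q.den - q.num.toNat : ℕ) : ℤ) = (q.den : ℤ) - q.num := by omega
      exact_mod_cast hz
    rw [← h1']
    exact Mq_nat_mul q _ n
  have chain : ∀ n : ℕ,
      PIdealIn (M : Set ℚ) ((q.den : ℚ) * q ^ n) ⊆
      PIdealIn (M : Set ℚ) ((q.den : ℚ) * q ^ (n + 1)) := by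
    intro n x hx
    obtain ⟨c, hc, rfl⟩ := hx
    refine ⟨((q.den : ℚ) - (q.num : ℚ)) * q ^ n + c,
      AddSubmonoid.add_mem _ (hdiffmem n) hc, ?_⟩
    rw [hkey n]; ring
  have notstab : ¬ ∃ N : ℕ, ∀ n, N ≤ n →
      PIdealIn (M : Set ℚ) ((q.den : ℚ) * q ^ n) =
      PIdealIn (M : Set ℚ) ((q.den : ℚ) * q ^ N) := by
    rintro ⟨N, hN⟩
    have heq := hN (N + 1) (Nat.le_succ N)
    have hmem : (q.den : ℚ) * q ^ (N + 1) ∈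
        PIdealIn (M : Set ℚ) ((q.den : ℚ) * q ^ (N + 1)) :=
      ⟨0, AddSubmonoid.zero_mem _, by ring⟩
    rw [heq] at hmem
    obtain ⟨c, hc, hce⟩ := hmem
    have hc0 : 0 ≤ c := Mq_nonneg q h0 c hc
    have hqN : (0 : ℚ) < q ^ N := by positivity
    have hlt := mul_lt_mul_of_pos_left h1 (mul_pos hden hqN)
    rw [pow_succ] at hce
    nlinarith [hce, hlt]
  refine ⟨chain, notstab, ?_⟩
  intro haccp
  exact notstab (haccp (fun n => (q.den : ℚ) * q ^ n)
    (fun n => by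
      have := Mq_nat_mul q q.den n
      simpa using this)
    chain)
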